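/- arXiv:1809.01788 — 2 statements merged into one kernel-verified Lean document; each statement's English description precedes it below -/
import Mathlib

section
/- Let T : L¹(Ω,μ) → L¹(Ω,μ) be a linear map that is simultaneously an L¹-contraction and an L^∞-contraction on L¹ ∩ L^∞ (a Dunford–Schwartz operator). Then for every 1 ≤ p ≤ ∞, T maps L¹ ∩ L^p into itself and ‖T f‖_p ≤ ‖f‖_p for all f ∈ L¹ ∩ L^p. -/
open MeasureTheory ENNReal Set

private lemma one_dim {q : ℝ} (hq : 1 < q) (a : ℝ≥0∞) :
    ∫⁻ t in Ioi (0:ℝ), ENNReal.ofReal (t ^ (q-2)) * (a - ENNReal.ofReal t) =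
      ENNReal.ofReal (1 / (q * (q-1))) * a ^ q := by
  rcases eq_or_ne a ⊤ with rfl | hatop
  · rw [setLIntegral_congr_fun measurableSet_Ioi
      (fun t (ht : t ∈ Ioi (0:ℝ)) => ?_), setLIntegral_const,
      ENNReal.top_rpow_of_pos (by linarith), ENNReal.mul_top (a := ENNReal.ofReal (1/(q*(q-1))))
        (by simp only [ne_eq, ENNReal.ofReal_eq_zero, not_le]; exact one_div_pos.mpr (by nlinarith)),
      ENNReal.top_mul (by simp [Real.volume_Ioi])]
    show ENNReal.ofReal (t ^ (q-2)) * (⊤ - ENNReal.ofReal t) = ⊤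
    rw [ENNReal.sub_eq_top_iff.mpr ⟨rfl, ENNReal.ofReal_ne_top⟩, ENNReal.mul_top
      (by simp only [ne_eq, ENNReal.ofReal_eq_zero, not_le]; exact Real.rpow_pos_of_pos ht _)]
  rcases eq_or_ne a 0 with rfl | hazero
  · simp [ENNReal.zero_rpow_of_pos (show (0:ℝ) < q by linarith), zero_tsub]
  set x := a.toReal with hxdef
  have hx : 0 < x := ENNReal.toReal_pos hazero hatop
  have hax : a = ENNReal.ofReal x := (ENNReal.ofReal_toReal hatop).symm
  -- rewrite integrand as ofReal of a real function
  have step1 : ∫⁻ t in Ioi (0:ℝ), ENNReal.ofReal (t ^ (q-2)) * (a - ENNReal.ofReal t)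
      = ∫⁻ t in Ioi (0:ℝ), ENNReal.ofReal (t ^ (q-2) * (x - t)) := by
    refine setLIntegral_congr_fun measurableSet_Ioi (fun t (ht : 0 < t) => ?_)
    rw [hax, ← ENNReal.ofReal_sub x ht.le, ← ENNReal.ofReal_mul (Real.rpow_nonneg ht.le _)]
  rw [step1, ← Ioc_union_Ioi_eq_Ioi hx.le,
    lintegral_union measurableSet_Ioi (Ioc_disjoint_Ioi le_rfl)]
  have step2 : ∫⁻ t in Ioi x, ENNReal.ofReal (t ^ (q-2) * (x - t)) = 0 := by
    rw [setLIntegral_congr_fun measurableSet_Ioi (fun t (ht : x < t) => ?_),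
      lintegral_zero]
    have h0t : (0:ℝ) < t := hx.trans ht
    exact ENNReal.ofReal_eq_zero.mpr
      (mul_nonpos_iff.mpr (Or.inl ⟨Real.rpow_nonneg h0t.le _, by linarith⟩))
  have step3 : ∫⁻ t in Ioc 0 x, ENNReal.ofReal (t ^ (q-2) * (x - t))
      = ∫⁻ t in Ioc 0 x, ENNReal.ofReal (x * t ^ (q-2) - t ^ (q-1)) := by
    refine setLIntegral_congr_fun measurableSet_Ioc (fun t ht => ?_)
    have h1 : t ^ (q-1) = t ^ (q-2) * t := by
      rw [show q - 1 = (q-2) + 1 by ring, Real.rpow_add_one (ne_of_gt ht.1)]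
    rw [h1]; ring_nf
  have hi1 : IntegrableOn (fun t : ℝ => t ^ (q-2)) (Ioc 0 x) volume :=
    (intervalIntegrable_iff_integrableOn_Ioc_of_le hx.le).mp
      (intervalIntegral.intervalIntegrable_rpow' (by linarith))
  have hi2 : IntegrableOn (fun t : ℝ => t ^ (q-1)) (Ioc 0 x) volume :=
    (intervalIntegrable_iff_integrableOn_Ioc_of_le hx.le).mp
      (intervalIntegral.intervalIntegrable_rpow' (by linarith))
  have hint : IntegrableOn (fun t : ℝ => x * t ^ (q-2) - t ^ (q-1)) (Ioc 0 x) volume :=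
    (hi1.const_mul x).sub hi2
  have hnn : 0 ≤ᵐ[volume.restrict (Ioc 0 x)] fun t : ℝ => x * t ^ (q-2) - t ^ (q-1) := by
    refine (ae_restrict_iff' measurableSet_Ioc).mpr (ae_of_all _ fun t ht => ?_)
    have h1 : t ^ (q-1) = t ^ (q-2) * t := by
      rw [show q - 1 = (q-2) + 1 by ring, Real.rpow_add_one (ne_of_gt ht.1)]
    have h2 : (0:ℝ) ≤ t ^ (q-2) := Real.rpow_nonneg ht.1.le _
    show (0:ℝ) ≤ x * t ^ (q-2) - t ^ (q-1)
    rw [h1]; nlinarith [ht.2]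
  have step4 : ∫⁻ t in Ioc 0 x, ENNReal.ofReal (x * t ^ (q-2) - t ^ (q-1))
      = ENNReal.ofReal (∫ t in Ioc 0 x, (x * t ^ (q-2) - t ^ (q-1))) :=
    (ofReal_integral_eq_lintegral_ofReal hint hnn).symm
  have e1 : ∫ t in Ioc 0 x, (t : ℝ) ^ (q-2) = x ^ (q-1) / (q-1) := by
    rw [← intervalIntegral.integral_of_le hx.le, integral_rpow (Or.inl (by linarith))]
    rw [Real.zero_rpow (by norm_num; linarith : q - 2 + 1 ≠ 0)]
    ring_nf
  have e2 : ∫ t in Ioc 0 x, (t : ℝ) ^ (q-1) = x ^ q / q := by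
    rw [← intervalIntegral.integral_of_le hx.le, integral_rpow (Or.inl (by linarith))]
    rw [Real.zero_rpow (by norm_num; linarith : q - 1 + 1 ≠ 0)]
    norm_num
  have e3 : ∫ t in Ioc 0 x, (x * t ^ (q-2) - t ^ (q-1)) = 1 / (q * (q-1)) * x ^ q := by
    have hxq : x * x ^ (q-1) = x ^ q := by
      rw [show q = (q-1) + 1 by ring, Real.rpow_add_one (ne_of_gt hx)]; ring
    have hq0 : q ≠ 0 := by linarith
    have hq1 : q - 1 ≠ 0 := by linarith
    rw [integral_sub (hi1.const_mul x) hi2, MeasureTheory.integral_const_mul, e1, e2,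
      ← mul_div_assoc, hxq]
    field_simp
    ring
  rw [step2, add_zero, step3, step4, e3,
    ENNReal.ofReal_mul (one_div_nonneg.mpr (by nlinarith)), hax,
    ← ENNReal.ofReal_rpow_of_pos hx]

private lemma layercake {q : ℝ} (hq : 1 < q) {Ω : Type*} [MeasurableSpace Ω] {μ : Measure Ω} [SFinite μ]
    {u : Ω → ℝ≥0∞} (hu : AEMeasurable u μ) :
    ∫⁻ ω, u ω ^ q ∂μ = ENNReal.ofReal (q*(q-1)) *
      ∫⁻ t in Ioi (0:ℝ), ENNReal.ofReal (t^(q-2)) * ∫⁻ ω, (u ω - ENNReal.ofReal t) ∂μ := by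
  obtain ⟨w, hwm, hweq⟩ := hu
  have h1 : ∫⁻ ω, u ω ^ q ∂μ = ∫⁻ ω, w ω ^ q ∂μ :=
    lintegral_congr_ae (hweq.mono fun ω h => by simp only [h])
  have h2 : ∀ t : ℝ, ∫⁻ ω, (u ω - ENNReal.ofReal t) ∂μ = ∫⁻ ω, (w ω - ENNReal.ofReal t) ∂μ :=
    fun t => lintegral_congr_ae (hweq.mono fun ω h => by simp only [h])
  simp_rw [h1, h2]
  have hmeas : Measurable (Function.uncurry fun (t : ℝ) (ω : Ω) =>
      ENNReal.ofReal (t^(q-2)) * (w ω - ENNReal.ofReal t)) := by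
    apply Measurable.mul
    · exact (measurable_fst.pow measurable_const).ennreal_ofReal
    · exact (hwm.comp measurable_snd).sub measurable_fst.ennreal_ofReal
  have hswap := lintegral_lintegral_swap (μ := volume.restrict (Ioi (0:ℝ))) (ν := μ)
    hmeas.aemeasurable
  calc ∫⁻ ω, w ω ^ q ∂μ
      = ∫⁻ ω, ENNReal.ofReal (q*(q-1)) *
          (ENNReal.ofReal (1 / (q * (q-1))) * w ω ^ q) ∂μ := by
        refine lintegral_congr fun ω => ?_
        rw [← mul_assoc, ← ENNReal.ofReal_mul (by nlinarith),
          mul_one_div_cancel (by nlinarith), ENNReal.ofReal_one, one_mul]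
    _ = ENNReal.ofReal (q*(q-1)) *
          ∫⁻ ω, ENNReal.ofReal (1 / (q * (q-1))) * w ω ^ q ∂μ :=
        lintegral_const_mul' _ _ ENNReal.ofReal_ne_top
    _ = ENNReal.ofReal (q*(q-1)) *
          ∫⁻ ω, ∫⁻ t in Ioi (0:ℝ), ENNReal.ofReal (t^(q-2)) * (w ω - ENNReal.ofReal t) ∂volume ∂μ := by
        congr 1
        exact lintegral_congr fun ω => (one_dim hq (w ω)).symm
    _ = ENNReal.ofReal (q*(q-1)) *
          ∫⁻ t in Ioi (0:ℝ), ∫⁻ ω, ENNReal.ofReal (t^(q-2)) * (w ω - ENNReal.ofReal t) ∂μ ∂volume := by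
        rw [← hswap]
    _ = ENNReal.ofReal (q*(q-1)) *
          ∫⁻ t in Ioi (0:ℝ), ENNReal.ofReal (t^(q-2)) * ∫⁻ ω, (w ω - ENNReal.ofReal t) ∂μ ∂volume := by
        congr 1
        exact lintegral_congr fun t => lintegral_const_mul' _ _ ENNReal.ofReal_ne_top

theorem dunford_schwartz_Lp_contraction
    {Ω : Type*} [MeasurableSpace Ω] (μ : Measure Ω) [SigmaFinite μ]
    (T : Lp ℂ 1 μ →ₗ[ℂ] Lp ℂ 1 μ)
    (hL1 : ∀ f : Lp ℂ 1 μ, ‖T f‖ ≤ ‖f‖)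
    (hLinf : ∀ f : Lp ℂ 1 μ, MemLp (f : Ω → ℂ) ∞ μ →
      eLpNorm ((T f : Lp ℂ 1 μ) : Ω → ℂ) ∞ μ ≤ eLpNorm ((f : Lp ℂ 1 μ) : Ω → ℂ) ∞ μ) :
    ∀ p : ℝ≥0∞, 1 ≤ p → ∀ f : Lp ℂ 1 μ, MemLp (f : Ω → ℂ) p μ →
      MemLp ((T f : Lp ℂ 1 μ) : Ω → ℂ) p μ ∧
      eLpNorm ((T f : Lp ℂ 1 μ) : Ω → ℂ) p μ ≤ eLpNorm ((f : Lp ℂ 1 μ) : Ω → ℂ) p μ := by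
  -- L1 contraction in eLpNorm form
  have hL1' : ∀ g : Lp ℂ 1 μ, eLpNorm ((T g : Lp ℂ 1 μ) : Ω → ℂ) 1 μ ≤
      eLpNorm ((g : Lp ℂ 1 μ) : Ω → ℂ) 1 μ := by
    intro g
    have := hL1 g
    rw [Lp.norm_def, Lp.norm_def] at this
    exact (ENNReal.toReal_le_toReal (Lp.eLpNorm_ne_top _) (Lp.eLpNorm_ne_top _)).mp this
  -- key truncation inequality
  have key : ∀ (f : Lp ℂ 1 μ) (t : ℝ), 0 < t →
      ∫⁻ ω, ((‖((T f : Lp ℂ 1 μ) : Ω → ℂ) ω‖₊ : ℝ≥0∞) - ENNReal.ofReal t) ∂μ ≤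
      ∫⁻ ω, ((‖(f : Ω → ℂ) ω‖₊ : ℝ≥0∞) - ENNReal.ofReal t) ∂μ := by
    intro f t ht
    set φ : ℂ → ℂ := fun z => if ‖z‖ ≤ t then z else (t/‖z‖) • z with hφdef
    have hφmeas : Measurable φ :=
      Measurable.ite (measurableSet_le measurable_norm measurable_const) measurable_id
        ((measurable_const.div measurable_norm).smul measurable_id)
    have hφz : ∀ z : ℂ, φ z = if ‖z‖ ≤ t then z else (t/‖z‖) • z := fun z => rfl
    have hφ_le : ∀ z : ℂ, ‖φ z‖ ≤ ‖z‖ := by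
      intro z
      by_cases h : ‖z‖ ≤ t
      · rw [hφz, if_pos h]
      · push_neg at h
        have hz : (0:ℝ) < ‖z‖ := lt_trans ht h
        rw [hφz, if_neg (not_le.mpr h), norm_smul, Real.norm_eq_abs,
          abs_of_nonneg (div_nonneg ht.le hz.le), div_mul_cancel₀ _ (ne_of_gt hz)]
        linarith
    have hφ_bd : ∀ z : ℂ, ‖φ z‖ ≤ t := by
      intro z
      by_cases h : ‖z‖ ≤ t
      · rw [hφz, if_pos h]; exact h
      · push_neg at h
        have hz : (0:ℝ) < ‖z‖ := lt_trans ht h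
        rw [hφz, if_neg (not_le.mpr h), norm_smul, Real.norm_eq_abs,
          abs_of_nonneg (div_nonneg ht.le hz.le), div_mul_cancel₀ _ (ne_of_gt hz)]
    have hφ_sub : ∀ z : ℂ, (‖z - φ z‖₊ : ℝ≥0∞) = (‖z‖₊ : ℝ≥0∞) - ENNReal.ofReal t := by
      intro z
      by_cases h : ‖z‖ ≤ t
      · rw [hφz, if_pos h, sub_self, nnnorm_zero, ENNReal.coe_zero,
          eq_comm, tsub_eq_zero_iff_le, ← enorm_eq_nnnorm, ← ofReal_norm]
        exact ENNReal.ofReal_le_ofReal h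
      · push_neg at h
        have hz : (0:ℝ) < ‖z‖ := lt_trans ht h
        have : z - φ z = (1 - t/‖z‖) • z := by
          rw [hφz, if_neg (not_le.mpr h), sub_smul, one_smul]
        rw [this, ← enorm_eq_nnnorm, ← ofReal_norm, ← enorm_eq_nnnorm, ← ofReal_norm, norm_smul,
          Real.norm_eq_abs, abs_of_nonneg (by rw [sub_nonneg]; exact (div_le_one hz).mpr h.le),
          sub_mul, one_mul, div_mul_cancel₀ _ (ne_of_gt hz),
          ENNReal.ofReal_sub _ ht.le]
    set F : Ω → ℂ := ((f : Lp ℂ 1 μ) : Ω → ℂ) with hFdef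
    have hFmeas : AEStronglyMeasurable F μ := Lp.aestronglyMeasurable f
    have hmem : MemLp (φ ∘ F) 1 μ := by
      refine ⟨(hφmeas.comp_aemeasurable hFmeas.aemeasurable).aestronglyMeasurable, ?_⟩
      exact lt_of_le_of_lt (eLpNorm_mono fun ω => hφ_le (F ω)) (Lp.eLpNorm_lt_top f)
    set h : Lp ℂ 1 μ := hmem.toLp (φ ∘ F) with hhdef
    have hh : (h : Ω → ℂ) =ᵐ[μ] φ ∘ F := hmem.coeFn_toLp
    set g : Lp ℂ 1 μ := f - h with hgdef
    have hTf : T f = T g + T h := by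
      rw [← map_add, hgdef, sub_add_cancel]
    have hTfc : ((T f : Lp ℂ 1 μ) : Ω → ℂ) =ᵐ[μ]
        ((T g : Lp ℂ 1 μ) : Ω → ℂ) + ((T h : Lp ℂ 1 μ) : Ω → ℂ) := by
      rw [hTf]; exact Lp.coeFn_add _ _
    have hhinf : MemLp ((h : Lp ℂ 1 μ) : Ω → ℂ) ∞ μ :=
      memLp_top_of_bound (Lp.aestronglyMeasurable h) t
        (hh.mono fun ω hω => by rw [hω]; exact hφ_bd (F ω))
    have hTh_bd : eLpNorm ((T h : Lp ℂ 1 μ) : Ω → ℂ) ∞ μ ≤ ENNReal.ofReal t := by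
      refine (hLinf h hhinf).trans ?_
      rw [eLpNorm_congr_ae hh, eLpNorm_exponent_top]
      exact eLpNormEssSup_le_of_ae_bound (ae_of_all _ fun ω => hφ_bd (F ω))
    have hTh_ae : ∀ᵐ ω ∂μ, (‖((T h : Lp ℂ 1 μ) : Ω → ℂ) ω‖₊ : ℝ≥0∞) ≤ ENNReal.ofReal t := by
      refine (ae_le_eLpNormEssSup (f := ((T h : Lp ℂ 1 μ) : Ω → ℂ)) (μ := μ)).mono fun ω hω => ?_
      exact hω.trans (by rw [← eLpNorm_exponent_top]; exact hTh_bd)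
    have hptwise : ∀ᵐ ω ∂μ, (‖((T f : Lp ℂ 1 μ) : Ω → ℂ) ω‖₊ : ℝ≥0∞) - ENNReal.ofReal t ≤
        (‖((T g : Lp ℂ 1 μ) : Ω → ℂ) ω‖₊ : ℝ≥0∞) := by
      filter_upwards [hTfc, hTh_ae] with ω h1 h2
      rw [tsub_le_iff_right]
      calc (‖((T f : Lp ℂ 1 μ) : Ω → ℂ) ω‖₊ : ℝ≥0∞)
          = (‖((T g : Lp ℂ 1 μ) : Ω → ℂ) ω + ((T h : Lp ℂ 1 μ) : Ω → ℂ) ω‖₊ : ℝ≥0∞) := by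
            rw [h1]; rfl
        _ ≤ (‖((T g : Lp ℂ 1 μ) : Ω → ℂ) ω‖₊ : ℝ≥0∞) +
            (‖((T h : Lp ℂ 1 μ) : Ω → ℂ) ω‖₊ : ℝ≥0∞) := by
            rw [← ENNReal.coe_add]; exact ENNReal.coe_le_coe.mpr (nnnorm_add_le _ _)
        _ ≤ (‖((T g : Lp ℂ 1 μ) : Ω → ℂ) ω‖₊ : ℝ≥0∞) + ENNReal.ofReal t :=
            add_le_add le_rfl h2
    calc ∫⁻ ω, ((‖((T f : Lp ℂ 1 μ) : Ω → ℂ) ω‖₊ : ℝ≥0∞) - ENNReal.ofReal t) ∂μ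
        ≤ ∫⁻ ω, (‖((T g : Lp ℂ 1 μ) : Ω → ℂ) ω‖₊ : ℝ≥0∞) ∂μ := lintegral_mono_ae hptwise
      _ = eLpNorm ((T g : Lp ℂ 1 μ) : Ω → ℂ) 1 μ := (eLpNorm_one_eq_lintegral_enorm (f := ((T g : Lp ℂ 1 μ) : Ω → ℂ))).symm
      _ ≤ eLpNorm ((g : Lp ℂ 1 μ) : Ω → ℂ) 1 μ := hL1' g
      _ = ∫⁻ ω, (‖((g : Lp ℂ 1 μ) : Ω → ℂ) ω‖₊ : ℝ≥0∞) ∂μ := eLpNorm_one_eq_lintegral_enorm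
      _ = ∫⁻ ω, ((‖(f : Ω → ℂ) ω‖₊ : ℝ≥0∞) - ENNReal.ofReal t) ∂μ := by
          have hgc : ((g : Lp ℂ 1 μ) : Ω → ℂ) =ᵐ[μ] F - φ ∘ F := by
            refine (Lp.coeFn_sub f h).trans ?_
            filter_upwards [hh] with ω hω
            simp [hω, hFdef]
          refine lintegral_congr_ae ?_
          filter_upwards [hgc] with ω hω
          rw [hω]
          exact hφ_sub (F ω)
  intro p hp f hf
  by_cases hptop : p = ∞
  · subst hptop
    exact ⟨⟨(Lp.memLp (T f)).aestronglyMeasurable, lt_of_le_of_lt (hLinf f hf) hf.2⟩, hLinf f hf⟩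
  by_cases hp1 : p = 1
  · subst hp1
    exact ⟨Lp.memLp (T f), hL1' f⟩
  -- 1 < p < ∞
  have hq : 1 < p.toReal := by
    rw [← ENNReal.toReal_one]
    exact (ENNReal.toReal_lt_toReal (by simp) hptop).mpr (lt_of_le_of_ne hp (Ne.symm hp1))
  have hintle : ∫⁻ ω, (‖((T f : Lp ℂ 1 μ) : Ω → ℂ) ω‖₊ : ℝ≥0∞) ^ p.toReal ∂μ ≤
      ∫⁻ ω, (‖(f : Ω → ℂ) ω‖₊ : ℝ≥0∞) ^ p.toReal ∂μ := by
    rw [layercake hq (u := fun ω => (‖((T f : Lp ℂ 1 μ) : Ω → ℂ) ω‖₊ : ℝ≥0∞)) (Lp.aestronglyMeasurable (T f)).enorm,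
      layercake hq (u := fun ω => (‖(f : Ω → ℂ) ω‖₊ : ℝ≥0∞)) (Lp.aestronglyMeasurable f).enorm]
    refine mul_le_mul_right (lintegral_mono_ae ?_) _
    refine (ae_restrict_iff' measurableSet_Ioi).mpr (ae_of_all _ fun t ht => ?_)
    exact mul_le_mul_right (key f t ht) _
  have hnorm : eLpNorm ((T f : Lp ℂ 1 μ) : Ω → ℂ) p μ ≤ eLpNorm ((f : Lp ℂ 1 μ) : Ω → ℂ) p μ := by
    rw [eLpNorm_eq_lintegral_rpow_enorm_toReal (zero_lt_one.trans_le hp).ne' hptop,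
      eLpNorm_eq_lintegral_rpow_enorm_toReal (zero_lt_one.trans_le hp).ne' hptop]
    exact ENNReal.rpow_le_rpow hintle (by positivity)
  exact ⟨⟨(Lp.memLp (T f)).aestronglyMeasurable, lt_of_le_of_lt hnorm hf.2⟩, hnorm⟩
end

section
/- Let (Ω,μ) be a measure space, and suppose f_t → f almost uniformly as t → ∞ in L⁰(𝕋×Ω, ν×μ), where 𝕋 carries normalized Haar measure ν. Then for ν-almost every z ∈ 𝕋, the slices f_t(z,·) converge almost uniformly to f(z,·) in L⁰(Ω,μ) as t → ∞. -/
open MeasureTheory Filter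

/-- Almost uniform convergence of a family `(F t)` to `f` as `t → ∞`. -/
def AUTendsto {X : Type*} [MeasurableSpace X] (m : Measure X)
    (F : ℝ → X → ℂ) (f : X → ℂ) : Prop :=
  ∀ ε : ℝ, 0 < ε → ∃ A : Set X, MeasurableSet A ∧ m Aᶜ ≤ ENNReal.ofReal ε ∧
    ∀ δ : ℝ, 0 < δ → ∃ t₀ : ℝ, ∀ t : ℝ, t₀ ≤ t → ∀ x ∈ A, ‖F t x - f x‖ ≤ δ

theorem au_convergence_of_slices
    {Ω : Type*} [MeasurableSpace Ω] (μ : Measure Ω) [SigmaFinite μ]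
    (F : ℝ → UnitAddCircle × Ω → ℂ) (f : UnitAddCircle × Ω → ℂ)
    (hau : AUTendsto ((volume : Measure UnitAddCircle).prod μ) F f) :
    ∀ᵐ z ∂(volume : Measure UnitAddCircle),
      AUTendsto μ (fun t ω => F t (z, ω)) (fun ω => f (z, ω)) := by
  set ν := (volume : Measure UnitAddCircle)
  have key : ∀ n : ℕ, ∃ A : Set (UnitAddCircle × Ω), MeasurableSet A ∧
      (ν.prod μ) Aᶜ ≤ ENNReal.ofReal ((1/2:ℝ)^n * (1/2:ℝ)^n) ∧
      ∀ δ : ℝ, 0 < δ → ∃ t₀ : ℝ, ∀ t, t₀ ≤ t → ∀ x ∈ A, ‖F t x - f x‖ ≤ δ :=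
    fun n => hau _ (by positivity)
  choose A hAmeas hAsmall hAconv using key
  set g : ℕ → UnitAddCircle → ENNReal := fun n z => μ (Prod.mk z ⁻¹' (A n)ᶜ) with hg
  have hg_meas : ∀ n, Measurable (g n) := fun n =>
    measurable_measure_prodMk_left (hAmeas n).compl
  have hg_int : ∀ n, ∫⁻ z, g n z ∂ν ≤ ENNReal.ofReal ((1/2:ℝ)^n * (1/2:ℝ)^n) := by
    intro n
    rw [hg]
    rw [← Measure.prod_apply (hAmeas n).compl]
    exact hAsmall n
  set B : ℕ → Set UnitAddCircle :=
    fun n => {z | ENNReal.ofReal ((1/2:ℝ)^n) ≤ g n z} with hBdef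
  have hB : ∀ n, ν (B n) ≤ ENNReal.ofReal ((1/2:ℝ)^n) := by
    intro n
    have h0 : ENNReal.ofReal ((1/2:ℝ)^n) ≠ 0 := by
      rw [Ne, ENNReal.ofReal_eq_zero, not_le]; positivity
    have h2 : ENNReal.ofReal ((1/2:ℝ)^n) * ν (B n) ≤
        ENNReal.ofReal ((1/2:ℝ)^n) * ENNReal.ofReal ((1/2:ℝ)^n) := by
      calc ENNReal.ofReal ((1/2:ℝ)^n) * ν (B n)
          ≤ ∫⁻ z, g n z ∂ν :=
            mul_meas_ge_le_lintegral₀ (hg_meas n).aemeasurable _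
        _ ≤ ENNReal.ofReal ((1/2:ℝ)^n * (1/2:ℝ)^n) := hg_int n
        _ = _ := ENNReal.ofReal_mul (by positivity)
    exact (ENNReal.mul_le_mul_iff_right h0 ENNReal.ofReal_ne_top).mp h2
  have hsum : ∑' n, ν (B n) ≠ ⊤ := by
    have h1 : ∑' n, ν (B n) ≤ ∑' n : ℕ, (ENNReal.ofReal (1/2:ℝ))^n := by
      refine ENNReal.tsum_le_tsum fun n => (hB n).trans_eq ?_
      rw [ENNReal.ofReal_pow (by norm_num)]
    refine ne_top_of_le_ne_top ?_ h1
    rw [ENNReal.tsum_geometric]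
    refine ENNReal.inv_ne_top.mpr ?_
    rw [Ne, tsub_eq_zero_iff_le, not_le]
    exact ENNReal.ofReal_lt_one.mpr (by norm_num)
  have hae : ∀ᵐ z ∂ν, z ∉ limsup B atTop := by
    have := measure_limsup_atTop_eq_zero hsum
    rw [ae_iff]; simpa using this
  filter_upwards [hae] with z hz
  rw [mem_limsup_iff_frequently_mem, not_frequently] at hz
  obtain ⟨N, hN⟩ := eventually_atTop.mp hz
  intro ε hε
  obtain ⟨n0, hn0⟩ := exists_pow_lt_of_lt_one hε (by norm_num : (1/2:ℝ) < 1)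
  set n := max N n0 with hn
  refine ⟨Prod.mk z ⁻¹' A n, (hAmeas n).preimage measurable_prodMk_left, ?_, ?_⟩
  · have hzn : z ∉ B n := hN n (le_max_left _ _)
    rw [hBdef, Set.mem_setOf_eq, not_le] at hzn
    rw [← Set.preimage_compl]
    refine le_trans hzn.le (ENNReal.ofReal_le_ofReal ?_)
    calc (1/2:ℝ)^n ≤ (1/2:ℝ)^n0 :=
          pow_le_pow_of_le_one (by norm_num) (by norm_num) (le_max_right _ _)
      _ ≤ ε := hn0.le
  · intro δ hδ
    obtain ⟨t₀, ht⟩ := hAconv n δ hδ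
    exact ⟨t₀, fun t htt x hx => ht t htt (z, x) hx⟩
end
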